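/- The only non-semisymmetric words of length 7 over the alphabet {1,2}, up to cyclic permutation and transposition of the associated periodic orbit, are 2112122 and 1112122; equivalently, every periodic orbit over {1,2} of minimal period at most 5 is semisymmetric, and the non-semisymmetric orbits of minimal period 7 are exactly those of 2112122 and 1112122 and their transposes. -/

import Mathlib

/-- The periodic bi-infinite sequence with period the word `w` (`w` at positions `0..len-1`). -/
def periodize (w : List ℕ) : ℤ → ℕ := fun n => w.getD (n % (w.length : ℤ)).toNat 0

/-- A word is a palindrome if it equals its transpose (reversal). -/
def IsPalindrome (w : List ℕ) : Prop := w.reverse = w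

/-- A word is semisymmetric if it is a palindrome or a concatenation of two palindromes. -/
def Semisymmetric (w : List ℕ) : Prop :=
  IsPalindrome w ∨ ∃ p q : List ℕ, w = p ++ q ∧ IsPalindrome p ∧ IsPalindrome q

/-- `w` is the minimal period of the periodic sequence `periodize w`:
no proper prefix generates the same periodic sequence. -/
def MinimalPeriodWord (w : List ℕ) : Prop :=
  w ≠ [] ∧ ∀ n : ℕ, 0 < n → n < w.length → periodize (w.take n) ≠ periodize w


/-- Boolean semisymmetry check. -/
def semisymB (w : List ℕ) : Bool :=
  (List.range (w.length + 1)).any fun n =>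
    ((w.take n).reverse == w.take n) && ((w.drop n).reverse == w.drop n)

lemma semisym_iff (w : List ℕ) : Semisymmetric w ↔ semisymB w = true := by
  constructor
  · rintro (h | ⟨p, q, rfl, hp, hq⟩)
    · simp [semisymB, List.any_eq_true]
      exact ⟨0, Nat.zero_le _, by simpa [IsPalindrome] using h⟩
    · simp [semisymB, List.any_eq_true]
      refine ⟨p.length, by simp [Nat.lt_succ], ?_, ?_⟩
      · simpa [List.take_left, IsPalindrome] using hp
      · simpa [List.drop_left, IsPalindrome] using hq
  · intro h
    simp [semisymB, List.any_eq_true] at h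
    obtain ⟨n, _, h1, h2⟩ := h
    exact Or.inr ⟨w.take n, w.drop n, (List.take_append_drop n w).symm, h1, h2⟩

/-- All binary (over {1,2}) words of length n. -/
def allBin : ℕ → List (List ℕ)
  | 0 => [[]]
  | n + 1 => (allBin n).flatMap fun t => [1 :: t, 2 :: t]

lemma mem_allBin (w : List ℕ) (h : ∀ x ∈ w, x = 1 ∨ x = 2) : w ∈ allBin w.length := by
  induction w with
  | nil => simp [allBin]
  | cons a t ih =>
    have ht : t ∈ allBin t.length := ih fun x hx => h x (List.mem_cons_of_mem _ hx)
    simp only [List.length_cons, allBin, List.mem_flatMap]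
    refine ⟨t, ht, ?_⟩
    rcases h a List.mem_cons_self with rfl | rfl <;> simp

def rhsB (w : List ℕ) : Bool :=
  (List.range 7).any fun k =>
    (w == List.rotate [2,1,1,2,1,2,2] k) || (w == List.rotate ([2,1,1,2,1,2,2].reverse) k) ||
    (w == List.rotate [1,1,1,2,1,2,2] k) || (w == List.rotate ([1,1,1,2,1,2,2].reverse) k)

set_option maxRecDepth 100000 in
lemma key7 : ∀ w ∈ allBin 7, (!semisymB w) = rhsB w := by decide

set_option maxRecDepth 100000 in
lemma key5 : ∀ n ≤ 5, ∀ w ∈ allBin n, semisymB w = true := by decide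

/-- Every periodic orbit over the alphabet {1,2} of minimal period at most 5 is
semisymmetric, and the non-semisymmetric orbits of minimal period 7 are exactly those
of `2112122` and `1112122` and their transposes (up to cyclic rotation). -/
theorem length_seven_nonsemisymmetric :
    (∀ w : List ℕ, (∀ x ∈ w, x = 1 ∨ x = 2) → MinimalPeriodWord w →
      w.length ≤ 5 → Semisymmetric w) ∧
    (∀ w : List ℕ, (∀ x ∈ w, x = 1 ∨ x = 2) → MinimalPeriodWord w →
      w.length = 7 →
      (¬ Semisymmetric w ↔ ∃ k : ℕ,
        w = List.rotate [2,1,1,2,1,2,2] k ∨ w = List.rotate ([2,1,1,2,1,2,2].reverse) k ∨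
        w = List.rotate [1,1,1,2,1,2,2] k ∨ w = List.rotate ([1,1,1,2,1,2,2].reverse) k)) := by
  constructor
  · intro w hbin _ hlen
    rw [semisym_iff]
    exact key5 w.length hlen w (mem_allBin w hbin)
  · intro w hbin _ hlen
    have hmem : w ∈ allBin 7 := hlen ▸ mem_allBin w hbin
    have hk := key7 w hmem
    rw [semisym_iff]
    constructor
    · intro h
      have : rhsB w = true := by rw [← hk]; simp [h]
      simp only [rhsB, List.any_eq_true, List.mem_range, Bool.or_eq_true, beq_iff_eq] at this
      obtain ⟨k, _, h'⟩ := this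
      exact ⟨k, by tauto⟩
    · rintro ⟨k, h'⟩ hs
      have hr : rhsB w = true := by
        simp only [rhsB, List.any_eq_true, List.mem_range, Bool.or_eq_true, beq_iff_eq]
        refine ⟨k % 7, Nat.mod_lt _ (by norm_num), ?_⟩
        rcases h' with h | h | h | h
        · exact Or.inl <| Or.inl <| Or.inl (by rw [h]; exact (List.rotate_mod _ k).symm)
        · exact Or.inl <| Or.inl <| Or.inr (by rw [h]; exact (List.rotate_mod _ k).symm)
        · exact Or.inl <| Or.inr (by rw [h]; exact (List.rotate_mod _ k).symm)
        · exact Or.inr (by rw [h]; exact (List.rotate_mod _ k).symm)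
      rw [← hk, hs] at hr
      simp at hr
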